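/- Let 0 < α < 1 be irrational and let μ be uniform on {α, 1}. Then the stationary distribution π_μ of the process x_{k+1} = |θ_{k+1} − x_k| has cumulative distribution function π_μ(x) = 2x/(1+α) for 0 ≤ x ≤ α, and π_μ(x) = (x+α)/(1+α) for α ≤ x ≤ 1. -/

import Mathlib

open MeasureTheory ENNReal

/-- For `μ` uniform on `{α, 1}` with `0 < α < 1` irrational, the stationary
distribution `π_μ` (given by the general formula
`π_μ(x) = (1/E(θ)) ∫₀ˣ Pr{θ > y} dy`, with `E(θ) = (1+α)/2`) has CDF
`π_μ(x) = 2x/(1+α)` for `0 ≤ x ≤ α` and `π_μ(x) = (x+α)/(1+α)` for `α ≤ x ≤ 1`. -/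
theorem stmt_9 (α : ℝ) (h0 : 0 < α) (h1 : α < 1) (hirr : Irrational α)
    (μ : Measure ℝ) (hμ : μ = (2 : ℝ≥0∞)⁻¹ • (Measure.dirac α + Measure.dirac 1))
    (π : Measure ℝ)
    (hπ : π = (volume.restrict (Set.Ici 0)).withDensity
      (fun y => μ (Set.Ioi y) / ENNReal.ofReal ((1 + α) / 2))) :
    (∀ x : ℝ, 0 ≤ x → x ≤ α → π (Set.Iic x) = ENNReal.ofReal (2 * x / (1 + α))) ∧
    (∀ x : ℝ, α ≤ x → x ≤ 1 → π (Set.Iic x) = ENNReal.ofReal ((x + α) / (1 + α))) := by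
  have hc : (0:ℝ) < (1+α)/2 := by linarith
  have hα1 : (1:ℝ) + α ≠ 0 := by linarith
  have hlow : ∀ y : ℝ, y < α → μ (Set.Ioi y) = 1 := by
    intro y hy
    subst hμ
    simp [Measure.dirac_apply, Set.indicator_apply, Set.mem_Ioi, hy, hy.trans h1]
    rw [ENNReal.inv_two_add_inv_two]
  have hmid : ∀ y : ℝ, α ≤ y → y < 1 → μ (Set.Ioi y) = 2⁻¹ := by
    intro y hy hy1
    subst hμ
    simp [Measure.dirac_apply, Set.indicator_apply, Set.mem_Ioi, not_lt.2 hy, hy1]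
  have hπap : ∀ x : ℝ, π (Set.Iic x)
      = ∫⁻ y in Set.Icc 0 x, μ (Set.Ioi y) / ENNReal.ofReal ((1+α)/2) := by
    intro x
    rw [hπ, withDensity_apply _ measurableSet_Iic,
      Measure.restrict_restrict measurableSet_Iic, Set.Iic_inter_Ici]
  have h2 : (2:ℝ≥0∞)⁻¹ = ENNReal.ofReal (1/2) := by
    rw [ENNReal.ofReal_div_of_pos two_pos]; simp
  have e1 : ∫⁻ y in Set.Ico 0 α, μ (Set.Ioi y) / ENNReal.ofReal ((1+α)/2)
      = ENNReal.ofReal (2*α/(1+α)) := by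
    have hfun : ∀ y ∈ Set.Ico 0 α, μ (Set.Ioi y) / ENNReal.ofReal ((1+α)/2)
        = 1 / ENNReal.ofReal ((1+α)/2) := fun y hy => by rw [hlow y hy.2]
    rw [setLIntegral_congr_fun measurableSet_Ico hfun,
      setLIntegral_const, Real.volume_Ico, one_div, ← ENNReal.div_eq_inv_mul,
      ← ENNReal.ofReal_div_of_pos hc]
    congr 1
    rw [sub_zero]
    field_simp
  constructor
  · intro x hx0 hxα
    have hfun : ∀ y ∈ Set.Ico 0 x, μ (Set.Ioi y) / ENNReal.ofReal ((1+α)/2)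
        = 1 / ENNReal.ofReal ((1+α)/2) :=
      fun y hy => by rw [hlow y (lt_of_lt_of_le hy.2 hxα)]
    rw [hπap, ← Measure.restrict_congr_set Ico_ae_eq_Icc,
      setLIntegral_congr_fun measurableSet_Ico hfun,
      setLIntegral_const, Real.volume_Ico, one_div, ← ENNReal.div_eq_inv_mul,
      ← ENNReal.ofReal_div_of_pos hc]
    congr 1
    rw [sub_zero]
    field_simp
  · intro x hxα hx1
    rw [hπap]
    have hsplit : Set.Icc 0 x = Set.Ico 0 α ∪ Set.Icc α x :=
      (Set.Ico_union_Icc_eq_Icc h0.le hxα).symm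
    have hdisj : Disjoint (Set.Ico 0 α) (Set.Icc α x) := by
      rw [Set.disjoint_left]
      rintro y hy1 hy2
      exact absurd hy2.1 (not_le.2 hy1.2)
    rw [hsplit, lintegral_union measurableSet_Icc hdisj, e1]
    have e2 : ∫⁻ y in Set.Icc α x, μ (Set.Ioi y) / ENNReal.ofReal ((1+α)/2)
        = ENNReal.ofReal ((x-α)/(1+α)) := by
      have hfun : ∀ y ∈ Set.Ico α x, μ (Set.Ioi y) / ENNReal.ofReal ((1+α)/2)
          = (2:ℝ≥0∞)⁻¹ / ENNReal.ofReal ((1+α)/2) :=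
        fun y hy => by rw [hmid y hy.1 (lt_of_lt_of_le hy.2 hx1)]
      rw [← Measure.restrict_congr_set Ico_ae_eq_Icc,
        setLIntegral_congr_fun measurableSet_Ico hfun,
        setLIntegral_const, Real.volume_Ico, h2,
        ← ENNReal.ofReal_div_of_pos hc, ← ENNReal.ofReal_mul (by positivity)]
      congr 1
      field_simp
    rw [e2, ← ENNReal.ofReal_add (div_nonneg (by linarith) (by linarith))
      (div_nonneg (by linarith) (by linarith))]
    congr 1
    field_simp
    ring
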